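/- For every finite plane tree T with n vertices, the rotated tree rot T has 2n−1 vertices and its Łukasiewicz walk equals the contour process of T followed by a final step down to −1: S_{rot T}(k) = C_T(k) for all 0 ≤ k ≤ 2n−2, and S_{rot T}(2n−1) = −1. -/

import Mathlib

inductive PTree : Type
  | node : List PTree → PTree

namespace PTree

instance : Inhabited PTree := ⟨node []⟩

mutual
def size : PTree → ℕ
  | node ts => 1 + sizeList ts
def sizeList : List PTree → ℕ
  | [] => 0
  | t :: ts => size t + sizeList ts
end

def deg : PTree → ℕ
  | node ts => ts.length

mutual
def degreesAux : PTree → List ℕ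
  | node ts => ts.length :: degreesListAux ts
def degreesListAux : List PTree → List ℕ
  | [] => []
  | t :: ts => degreesAux t ++ degreesListAux ts
end

mutual
def heightsAux : PTree → ℕ → List ℕ
  | node ts, d => d :: heightsListAux ts (d + 1)
def heightsListAux : List PTree → ℕ → List ℕ
  | [], _ => []
  | t :: ts, d => heightsAux t d ++ heightsListAux ts d
end

mutual
def contourAux : PTree → ℕ → List ℕ
  | node ts, d => d :: contourListAux ts (d + 1)
def contourListAux : List PTree → ℕ → List ℕ
  | [], _ => []
  | t :: ts, d => contourAux t d ++ (d - 1) :: contourListAux ts d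
end

mutual
def verticesAux : PTree → List ℕ → List (List ℕ)
  | node ts, p => p :: verticesListAux ts p 0
def verticesListAux : List PTree → List ℕ → ℕ → List (List ℕ)
  | [], _, _ => []
  | t :: ts, p, i => verticesAux t (p ++ [i]) ++ verticesListAux ts p (i + 1)
end

def vertices (T : PTree) : List (List ℕ) := verticesAux T []

/-- Height process of a plane tree. -/
def H (T : PTree) (k : ℕ) : ℕ := (heightsAux T 0).getD k 0

/-- Contour process of a plane tree. -/
def C (T : PTree) (k : ℕ) : ℕ := (contourAux T 0).getD k 0

/-- Łukasiewicz walk of a plane tree. -/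
def S (T : PTree) (k : ℕ) : ℤ :=
  (((degreesAux T).take k).map (fun d => (d : ℤ) - 1)).sum

def subtreeAt : List ℕ → PTree → Option PTree
  | [], t => some t
  | i :: p, node ts => (ts[i]?).bind (subtreeAt p)

def isInternal (T : PTree) (p : List ℕ) : Bool :=
  match subtreeAt p T with
  | some (node (_ :: _)) => true
  | _ => false

def isVertex (T : PTree) (p : List ℕ) : Bool := (subtreeAt p T).isSome

def rot : PTree → PTree
  | node [] => node []
  | node (t :: ts) => node [rot t, rot (node ts)]

mutual
def corot : PTree → PTree
  | node ts => corotAux ts (node [])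
def corotAux : List PTree → PTree → PTree
  | [], acc => acc
  | t :: ts, acc => corotAux ts (node [acc, corot t])
end

mutual
def mirror : PTree → PTree
  | node ts => node (mirrorList ts)
def mirrorList : List PTree → List PTree
  | [] => []
  | t :: ts => mirrorList ts ++ [mirror t]
end

mutual
def internalTree : PTree → PTree
  | node ts => node (internalList ts)
def internalList : List PTree → List PTree
  | [] => []
  | node [] :: ts => internalList ts
  | t :: ts => internalTree t :: internalList ts
end

def mirrorPath : PTree → List ℕ → List ℕ
  | _, [] => []
  | node ts, i :: p =>
      (ts.length - 1 - i) ::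
        (match ts[i]? with
         | some t => mirrorPath t p
         | none => p)

def lexLt : List ℕ → List ℕ → Bool
  | _, [] => false
  | [], _ :: _ => true
  | a :: as, b :: bs => if a < b then true else if a = b then lexLt as bs else false

def nonRootVertices (T : PTree) : List (List ℕ) := (vertices T).tail

def internalVertices (T : PTree) : List (List ℕ) :=
  (vertices T).filter (fun p => isInternal T p)

/-- the order-preserving identification between non-root vertices of `T` and
internal vertices of `rot T`. -/
def iota (T : PTree) (u : List ℕ) : List ℕ :=
  (internalVertices (rot T)).getD ((nonRootVertices T).idxOf u) []

/-- `L(u)`: number of edges grafted on the left of the ancestral line of `u`. -/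
def Lnum (T : PTree) (u : List ℕ) : ℕ :=
  ((vertices T).filter (fun w =>
      !w.isEmpty && (w.dropLast.isPrefixOf u && w.dropLast != u)
        && !(w.isPrefixOf u && w != u) && lexLt w u)).length

/-- mirrored enumeration of `T`. -/
def mirroredEnum (T : PTree) (k : ℕ) : List ℕ :=
  mirrorPath (mirror T) ((vertices (mirror T)).getD k [])

def descendR (T : PTree) : ℕ → List ℕ → List ℕ
  | 0, p => p
  | fuel + 1, p => if isInternal T (p ++ [1]) then descendR T fuel (p ++ [1]) else p

def ascend (visited : List (List ℕ)) : ℕ → List ℕ → List ℕ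
  | 0, p => p.dropLast
  | fuel + 1, p => if p.dropLast ∈ visited then ascend visited fuel p.dropLast else p.dropLast

def rightmostSeq (T : PTree) : ℕ → List (List ℕ)
  | 0 => []
  | k + 1 =>
      let prev := rightmostSeq T k
      let next :=
        match prev.getLast? with
        | none => descendR T (size T) []
        | some p =>
            if isInternal T (p ++ [0]) then descendR T (size T) (p ++ [0])
            else ascend prev (size T) p
      prev ++ [next]

def Hstar (T : PTree) (k : ℕ) : ℤ :=
  if k = 0 ∨ size T ≤ k then 0 else ((iota T (mirroredEnum T k)).length : ℤ)

end PTree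

-- AUX START
namespace PTree

mutual
def ctr : PTree → ℤ → List ℤ
  | node ts, d => d :: ctrList ts (d + 1)
def ctrList : List PTree → ℤ → List ℤ
  | [], _ => []
  | t :: ts, d => ctr t d ++ (d - 1) :: ctrList ts d
end

/-- prefix-sum trajectory of a Łukasiewicz-type walk. -/
def traj : ℤ → List ℕ → List ℤ
  | _, [] => []
  | x, d :: ds => (x + d - 1) :: traj (x + d - 1) ds

theorem size_pos : ∀ T : PTree, 1 ≤ size T
  | node ts => by simp [size]

mutual
theorem ctr_cast : ∀ (T : PTree) (d : ℕ),
    (contourAux T d).map (fun n : ℕ => (n : ℤ)) = ctr T (d : ℤ)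
  | node ts, d => by
      have h := ctrList_cast ts (d + 1) (by omega)
      rw [Nat.cast_add, Nat.cast_one] at h
      rw [contourAux, ctr, List.map_cons, h]
theorem ctrList_cast : ∀ (ts : List PTree) (d : ℕ), 1 ≤ d →
    (contourListAux ts d).map (fun n : ℕ => (n : ℤ)) = ctrList ts (d : ℤ)
  | [], _, _ => rfl
  | t :: ts, d, hd => by
      rw [contourListAux, ctrList, List.map_append, List.map_cons,
        ctr_cast t d, ctrList_cast ts d hd, Nat.cast_sub hd, Nat.cast_one]
end

mutual
theorem ctr_length : ∀ (T : PTree) (x : ℤ), (ctr T x).length + 1 = 2 * size T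
  | node ts, x => by
      simp [ctr, size, ctrList_length ts (x + 1)]
      omega
theorem ctrList_length : ∀ (ts : List PTree) (x : ℤ),
    (ctrList ts x).length = 2 * sizeList ts
  | [], _ => rfl
  | t :: ts, x => by
      have h1 := ctr_length t x
      simp [ctrList, sizeList, ctrList_length ts x]
      omega
end

mutual
theorem degreesAux_length : ∀ T : PTree, (degreesAux T).length = size T
  | node ts => by simp [degreesAux, size, degreesListAux_length ts]; omega
theorem degreesListAux_length : ∀ ts : List PTree,
    (degreesListAux ts).length = sizeList ts
  | [] => rfl
  | t :: ts => by
      simp [degreesListAux, sizeList, degreesAux_length t, degreesListAux_length ts]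
end

theorem rot_size : ∀ T : PTree, size (rot T) + 1 = 2 * size T
  | node [] => by simp [rot, size, sizeList]
  | node (t :: ts) => by
      have h1 := rot_size t
      have h2 := rot_size (node ts)
      simp [rot, size, sizeList] at *
      omega

theorem ctr_cons (T : PTree) (x : ℤ) : ctr T x = x :: (ctr T x).tail := by
  cases T with
  | node ts => simp [ctr]

theorem traj_main : ∀ (T : PTree) (x : ℤ) (E : List ℕ),
    traj x (degreesAux (rot T) ++ E) = (ctr T x).tail ++ (x - 1) :: traj (x - 1) E
  | node [], x, E => by
      simp [rot, degreesAux, degreesListAux, ctr, ctrList, traj]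
  | node (t :: ts), x, E => by
      have hdeg : degreesAux (rot (node (t :: ts))) =
          2 :: (degreesAux (rot t) ++ degreesAux (rot (node ts))) := by
        simp [rot, degreesAux, degreesListAux]
      have h1 := traj_main t (x + 1) (degreesAux (rot (node ts)) ++ E)
      have h2 := traj_main (node ts) x E
      have h3 := ctr_cons t (x + 1)
      rw [show x + 1 - 1 = x from by ring] at h1
      simp only [ctr, List.tail_cons] at h2
      rw [hdeg]
      simp only [List.cons_append, List.append_assoc, List.append_eq, traj]
      rw [show x + ((2 : ℕ) : ℤ) - 1 = x + 1 from by push_cast; ring, h1, h2]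
      simp only [ctr, ctrList, List.tail_cons]
      rw [show x + 1 - 1 = x from by ring]
      conv_rhs => rw [h3]
      simp

theorem getD_traj : ∀ (ds : List ℕ) (x : ℤ) (k : ℕ), k ≤ ds.length →
    x + (((ds.take k).map (fun d => (d : ℤ) - 1)).sum) = ((x :: traj x ds).getD k 0)
  | _, _, 0, _ => by simp
  | [], _, k + 1, h => by simp at h
  | d :: ds, x, k + 1, h => by
      have ih := getD_traj ds (x + d - 1) k (by simpa using h)
      have hsum : (((d :: ds).take (k + 1)).map (fun d => (d : ℤ) - 1)).sum
          = (d : ℤ) - 1 + ((ds.take k).map (fun d => (d : ℤ) - 1)).sum := by simp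
      rw [hsum, List.getD_cons_succ, traj, ← ih]
      ring

theorem getD_cast : ∀ (l : List ℕ) (k : ℕ),
    ((l.map (fun n : ℕ => (n : ℤ))).getD k 0) = ((l.getD k 0 : ℕ) : ℤ)
  | [], k => by simp
  | a :: l, 0 => by simp
  | a :: l, k + 1 => by simpa using getD_cast l k

theorem getD_append_lt : ∀ (A B : List ℤ) (k : ℕ), k < A.length →
    ((A ++ B).getD k 0) = A.getD k 0
  | [], _, k, h => by simp at h
  | a :: A, B, 0, _ => by simp
  | a :: A, B, k + 1, h => by
      simpa using getD_append_lt A B k (by simpa using h)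

theorem getD_append_len : ∀ (A : List ℤ) (b : ℤ),
    ((A ++ [b]).getD A.length 0) = b
  | [], b => by simp
  | a :: A, b => by simpa using getD_append_len A b

end PTree
-- AUX END

open PTree

-- STATEMENT 8
theorem stmt8 (T : PTree) :
    size (rot T) = 2 * size T - 1 ∧
    (∀ k ≤ 2 * size T - 2, S (rot T) k = (C T k : ℤ)) ∧
    S (rot T) (2 * size T - 1) = -1 := by
  have hn := size_pos T
  have hrs := rot_size T
  have hdl := degreesAux_length (rot T)
  have hcl := ctr_length T 0
  have hmain := traj_main T 0 []
  simp only [List.append_nil] at hmain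
  have hP : (0 : ℤ) :: traj 0 (degreesAux (rot T)) = ctr T 0 ++ [-1] := by
    rw [hmain, ctr_cons T 0]
    simp [traj]
  have hS : ∀ k ≤ 2 * size T - 1,
      S (rot T) k = ((ctr T 0 ++ [-1]).getD k 0) := by
    intro k hk
    have h1 := getD_traj (degreesAux (rot T)) 0 k (by omega)
    rw [hP] at h1
    simpa [S] using h1
  refine ⟨by omega, ?_, ?_⟩
  · intro k hk
    have hc := ctr_cast T 0
    push_cast at hc
    rw [hS k (by omega), getD_append_lt _ _ k (by omega), C, ← hc, getD_cast]
  · rw [hS _ le_rfl, show 2 * size T - 1 = (ctr T 0).length by omega,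
      getD_append_len]
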